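/- There exists ε > 0 such that for all real A and all T > 0 with |A·T| ≤ ε, the following holds: if λ ∈ ℂ has Re λ ≥ 0 and φ : [-1,1] → ℂ is a C⁴ function with φ(±1) = φ'(±1) = 0 satisfying φ''''(y) − 2T²φ''(y) + T⁴φ(y) + 3ATi[(1−y²)(φ''(y) − T²φ(y)) + 2φ(y)] = λ(φ''(y) − T²φ(y)) for all y ∈ (-1,1), then φ is identically zero. In other words, for |AT| sufficiently small, every eigenvalue of this Orr–Sommerfeld eigenvalue problem has strictly negative real part. -/

import Mathlib

open MeasureTheory intervalIntegral Set Complex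

lemma my_ibp {u v u' v' : ℝ → ℂ} (hu : ∀ x, HasDerivAt u (u' x) x)
    (hv : ∀ x, HasDerivAt v (v' x) x) (hu' : Continuous u') (hv' : Continuous v') :
    ∫ x in (-1:ℝ)..1, u' x * v x
      = u 1 * v 1 - u (-1) * v (-1) - ∫ x in (-1:ℝ)..1, u x * v' x := by
  have hcu : Continuous u := by
    rw [continuous_iff_continuousAt]; exact fun x => (hu x).continuousAt
  have hcv : Continuous v := by
    rw [continuous_iff_continuousAt]; exact fun x => (hv x).continuousAt
  have h := intervalIntegral.integral_deriv_mul_eq_sub (a := (-1:ℝ)) (b := 1)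
    (fun x _ => hu x) (fun x _ => hv x)
    (hu'.intervalIntegrable _ _) (hv'.intervalIntegrable _ _)
  have hadd := intervalIntegral.integral_add (μ := volume) (a := (-1:ℝ)) (b := 1)
    (f := fun x => u' x * v x) (g := fun x => u x * v' x)
    ((hu'.mul hcv).intervalIntegrable _ _) ((hcu.mul hv').intervalIntegrable _ _)
  rw [hadd] at h
  linear_combination h

lemma my_poincare {f f' : ℝ → ℂ} (hd : ∀ x, HasDerivAt f (f' x) x)
    (hf' : Continuous f') (h0 : f (-1) = 0) :
    ∫ y in (-1:ℝ)..1, Complex.normSq (f y) ≤ 16 * ∫ y in (-1:ℝ)..1, Complex.normSq (f' y) := by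
  have hcf : Continuous f := by
    rw [continuous_iff_continuousAt]; exact fun x => (hd x).continuousAt
  set D : ℝ → ℝ := fun t =>
    (f' t).re * (f t).re + (f t).re * (f' t).re + ((f' t).im * (f t).im + (f t).im * (f' t).im)
    with hD
  have hcD : Continuous D := by
    apply Continuous.add
    · exact ((Complex.continuous_re.comp hf').mul (Complex.continuous_re.comp hcf)).add
        ((Complex.continuous_re.comp hcf).mul (Complex.continuous_re.comp hf'))
    · exact ((Complex.continuous_im.comp hf').mul (Complex.continuous_im.comp hcf)).add
        ((Complex.continuous_im.comp hcf).mul (Complex.continuous_im.comp hf'))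
  have hgd : ∀ x, HasDerivAt (fun t => Complex.normSq (f t)) (D x) x := by
    intro x
    have hre : HasDerivAt (fun t => (f t).re) ((f' x).re) x :=
      Complex.reCLM.hasFDerivAt.comp_hasDerivAt x (hd x)
    have him : HasDerivAt (fun t => (f t).im) ((f' x).im) x :=
      Complex.imCLM.hasFDerivAt.comp_hasDerivAt x (hd x)
    have : HasDerivAt (fun t => (f t).re * (f t).re + (f t).im * (f t).im) (D x) x :=
      (hre.mul hre).add (him.mul him)
    simpa [Complex.normSq_apply] using this
  have hcg : Continuous fun t => Complex.normSq (f t) :=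
    Complex.continuous_normSq.comp hcf
  have hcf2 : Continuous fun t => Complex.normSq (f' t) :=
    Complex.continuous_normSq.comp hf'
  -- pointwise bound |D x| ≤ (1/4) normSq (f x) + 4 normSq (f' x)
  have hDb : ∀ x, |D x| ≤ (1/4) * Complex.normSq (f x) + 4 * Complex.normSq (f' x) := by
    intro x
    rw [abs_le]
    constructor <;>
    · simp only [hD, Complex.normSq_apply]
      nlinarith [sq_nonneg ((f x).re / 2 + 2 * (f' x).re), sq_nonneg ((f x).re / 2 - 2 * (f' x).re),
        sq_nonneg ((f x).im / 2 + 2 * (f' x).im), sq_nonneg ((f x).im / 2 - 2 * (f' x).im)]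
  have hM : True := trivial
  have hsup : ∀ y ∈ Icc (-1:ℝ) 1, Complex.normSq (f y) ≤ (1/4) * (∫ y in (-1:ℝ)..1, Complex.normSq (f y)) + 4 * (∫ y in (-1:ℝ)..1, Complex.normSq (f' y)) := by
    intro y hy
    have hftc : ∫ x in (-1:ℝ)..y, D x = Complex.normSq (f y) - Complex.normSq (f (-1)) :=
      intervalIntegral.integral_eq_sub_of_hasDerivAt (fun x _ => hgd x)
        (hcD.intervalIntegrable _ _)
    have h1 : ∫ x in (-1:ℝ)..y, D x ≤ ∫ x in (-1:ℝ)..y, |D x| := by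
      apply intervalIntegral.integral_mono_on hy.1
        (hcD.intervalIntegrable _ _) (hcD.abs.intervalIntegrable _ _)
      intro x _; exact le_abs_self _
    have h2 : ∫ x in (-1:ℝ)..y, |D x| ≤ ∫ x in (-1:ℝ)..1, |D x| := by
      apply intervalIntegral.integral_mono_interval le_rfl hy.1 hy.2
      · exact Filter.Eventually.of_forall fun x => abs_nonneg _
      · exact hcD.abs.intervalIntegrable _ _
    have h3 : ∫ x in (-1:ℝ)..1, |D x|
        ≤ ∫ x in (-1:ℝ)..1, ((1/4) * Complex.normSq (f x) + 4 * Complex.normSq (f' x)) := by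
      apply intervalIntegral.integral_mono_on (by norm_num)
        (hcD.abs.intervalIntegrable _ _)
        ((((continuous_const.mul hcg)).add ((continuous_const.mul hcf2))).intervalIntegrable _ _)
      intro x _; exact hDb x
    have h4 : ∫ x in (-1:ℝ)..1, ((1/4) * Complex.normSq (f x) + 4 * Complex.normSq (f' x)) = (1/4) * (∫ y in (-1:ℝ)..1, Complex.normSq (f y)) + 4 * (∫ y in (-1:ℝ)..1, Complex.normSq (f' y)) := by
      rw [intervalIntegral.integral_add (f := fun x => (1/4) * Complex.normSq (f x))
        (g := fun x => 4 * Complex.normSq (f' x)) (((continuous_const.mul hcg)).intervalIntegrable _ _)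
        (((continuous_const.mul hcf2)).intervalIntegrable _ _),
        intervalIntegral.integral_const_mul, intervalIntegral.integral_const_mul]
    rw [h0] at hftc
    simp only [Complex.normSq_zero, sub_zero] at hftc
    calc Complex.normSq (f y) = ∫ x in (-1:ℝ)..y, D x := hftc.symm
      _ ≤ ∫ x in (-1:ℝ)..y, |D x| := h1
      _ ≤ ∫ x in (-1:ℝ)..1, |D x| := h2
      _ ≤ ∫ x in (-1:ℝ)..1, ((1/4) * Complex.normSq (f x) + 4 * Complex.normSq (f' x)) := h3
      _ = _ := h4
  have hint : ∫ y in (-1:ℝ)..1, Complex.normSq (f y) ≤ ∫ _y in (-1:ℝ)..1, ((1/4) * (∫ y in (-1:ℝ)..1, Complex.normSq (f y)) + 4 * (∫ y in (-1:ℝ)..1, Complex.normSq (f' y))) := by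
    apply intervalIntegral.integral_mono_on (by norm_num) (hcg.intervalIntegrable _ _)
      (intervalIntegrable_const) hsup
  rw [intervalIntegral.integral_const] at hint
  simp only [smul_eq_mul] at hint
  have : (1 - (-1) : ℝ) = 2 := by norm_num
  rw [this] at hint
  linarith



set_option maxHeartbeats 1600000 in
/-- Claim \eqref{claim} of the paper: there is `ε > 0` such that whenever `|A·T| ≤ ε`
(`T > 0`), the Orr–Sommerfeld eigenvalue problem
`φ'''' − 2T²φ'' + T⁴φ + 3ATi[(1−y²)(φ'' − T²φ) + 2φ] = λ(φ'' − T²φ)` on `(-1,1)` with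
`φ(±1) = φ'(±1) = 0` has no nontrivial solution with `Re λ ≥ 0`; that is, every eigenvalue
has strictly negative real part. -/
theorem stmt_18 :
    ∃ ε > (0 : ℝ), ∀ (A T : ℝ), 0 < T → |A * T| ≤ ε →
      ∀ (lam : ℂ) (φ : ℝ → ℂ), 0 ≤ lam.re → ContDiff ℝ 4 φ →
        φ (-1) = 0 → φ 1 = 0 → deriv φ (-1) = 0 → deriv φ 1 = 0 →
        (∀ y ∈ Set.Ioo (-1 : ℝ) 1,
          iteratedDeriv 4 φ y - 2 * (T : ℂ) ^ 2 * iteratedDeriv 2 φ y + (T : ℂ) ^ 4 * φ y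
            + 3 * (A : ℂ) * (T : ℂ) * Complex.I *
                (((1 - y ^ 2 : ℝ) : ℂ) * (iteratedDeriv 2 φ y - (T : ℂ) ^ 2 * φ y)
                  + 2 * φ y)
            = lam * (iteratedDeriv 2 φ y - (T : ℂ) ^ 2 * φ y)) →
        ∀ y ∈ Set.Icc (-1 : ℝ) 1, φ y = 0 := by
  refine ⟨1/1000, by norm_num, ?_⟩
  intro A T hT hAT lam φ hlam hφ hm1 hp1 hdm1 hdp1 heq y₀ hy₀
  -- derivatives
  set d1 : ℝ → ℂ := deriv φ with hd1def
  set d2 : ℝ → ℂ := iteratedDeriv 2 φ with hd2def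
  set d3 : ℝ → ℂ := iteratedDeriv 3 φ with hd3def
  set d4 : ℝ → ℂ := iteratedDeriv 4 φ with hd4def
  have hc0 : Continuous φ := hφ.continuous
  have hc1 : Continuous d1 := by
    rw [hd1def, ← iteratedDeriv_one]; exact hφ.continuous_iteratedDeriv 1 (by norm_num)
  have hc2 : Continuous d2 := hφ.continuous_iteratedDeriv 2 (by norm_num)
  have hc3 : Continuous d3 := hφ.continuous_iteratedDeriv 3 (by norm_num)
  have hc4 : Continuous d4 := hφ.continuous_iteratedDeriv 4 (by norm_num)
  have e21 : d2 = deriv d1 := by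
    rw [hd1def, hd2def, show (2:ℕ) = 1+1 from rfl, iteratedDeriv_succ, iteratedDeriv_one]
  have e32 : d3 = deriv d2 := by
    rw [hd2def, hd3def, show (3:ℕ) = 2+1 from rfl, iteratedDeriv_succ]
  have e43 : d4 = deriv d3 := by
    rw [hd3def, hd4def, show (4:ℕ) = 3+1 from rfl, iteratedDeriv_succ]
  have hdiff1 : Differentiable ℝ d1 := by
    rw [hd1def, ← iteratedDeriv_one]; exact hφ.differentiable_iteratedDeriv 1 (by norm_num)
  have hdiff2 : Differentiable ℝ d2 := hφ.differentiable_iteratedDeriv 2 (by norm_num)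
  have hdiff3 : Differentiable ℝ d3 := hφ.differentiable_iteratedDeriv 3 (by norm_num)
  have hder0 : ∀ x, HasDerivAt φ (d1 x) x := fun x =>
    ((hφ.differentiable (by norm_num)).differentiableAt).hasDerivAt
  have hder1 : ∀ x, HasDerivAt d1 (d2 x) x := by
    intro x; rw [e21]; exact (hdiff1 x).hasDerivAt
  have hder2 : ∀ x, HasDerivAt d2 (d3 x) x := by
    intro x; rw [e32]; exact (hdiff2 x).hasDerivAt
  have hder3 : ∀ x, HasDerivAt d3 (d4 x) x := by
    intro x; rw [e43]; exact (hdiff3 x).hasDerivAt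
  -- conjugates
  have hdconj0 : ∀ x, HasDerivAt (fun t => (starRingEnd ℂ) (φ t)) ((starRingEnd ℂ) (d1 x)) x :=
    fun x => Complex.conjCLE.toContinuousLinearMap.hasFDerivAt.comp_hasDerivAt x (hder0 x)
  have hdconj1 : ∀ x, HasDerivAt (fun t => (starRingEnd ℂ) (d1 t)) ((starRingEnd ℂ) (d2 x)) x :=
    fun x => Complex.conjCLE.toContinuousLinearMap.hasFDerivAt.comp_hasDerivAt x (hder1 x)
  have hcconj0 : Continuous fun t => (starRingEnd ℂ) (φ t) := Complex.continuous_conj.comp hc0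
  have hcconj1 : Continuous fun t => (starRingEnd ℂ) (d1 t) := Complex.continuous_conj.comp hc1
  -- the real integrals
  set a : ℝ := ∫ x in (-1:ℝ)..1, Complex.normSq (d2 x) with ha_def
  set b : ℝ := ∫ x in (-1:ℝ)..1, Complex.normSq (d1 x) with hb_def
  set c : ℝ := ∫ x in (-1:ℝ)..1, Complex.normSq (φ x) with hc_def
  clear_value a b c
  -- integration by parts identities
  have hmc2 : (fun x => d2 x * (starRingEnd ℂ) (d2 x))
      = fun x => ((Complex.normSq (d2 x) : ℝ) : ℂ) := funext fun x => Complex.mul_conj _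
  have hmc1 : (fun x => d1 x * (starRingEnd ℂ) (d1 x))
      = fun x => ((Complex.normSq (d1 x) : ℝ) : ℂ) := funext fun x => Complex.mul_conj _
  have E2 : ∫ x in (-1:ℝ)..1, d2 x * (starRingEnd ℂ) (φ x) = -(b:ℂ) := by
    rw [my_ibp hder1 hdconj0 hc2 hcconj1]
    rw [hdm1, hdp1]
    simp only [zero_mul, sub_zero, zero_sub]
    rw [hmc1, intervalIntegral.integral_ofReal, ← hb_def]
  have E3 : ∫ x in (-1:ℝ)..1, d3 x * (starRingEnd ℂ) (d1 x) = -(a:ℂ) := by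
    rw [my_ibp hder2 hdconj1 hc3 (Complex.continuous_conj.comp hc2)]
    rw [hdm1, hdp1]
    simp only [map_zero, mul_zero, sub_zero, zero_sub]
    rw [hmc2, intervalIntegral.integral_ofReal, ← ha_def]
  have E4 : ∫ x in (-1:ℝ)..1, d4 x * (starRingEnd ℂ) (φ x) = (a:ℂ) := by
    rw [my_ibp hder3 hdconj0 hc4 hcconj1]
    rw [hm1, hp1]
    simp only [map_zero, mul_zero, sub_zero, zero_sub]
    rw [E3]
    ring
  have E0 : ∫ x in (-1:ℝ)..1, φ x * (starRingEnd ℂ) (φ x) = (c:ℂ) := by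
    have : (fun x => φ x * (starRingEnd ℂ) (φ x))
        = fun x => ((Complex.normSq (φ x) : ℝ) : ℂ) := funext fun x => Complex.mul_conj _
    rw [this, intervalIntegral.integral_ofReal, ← hc_def]
  set P : ℝ := ∫ x in (-1:ℝ)..1, (1 - x^2) * Complex.normSq (φ x) with hP_def
  clear_value P
  have EP : ∫ x in (-1:ℝ)..1, ((1 - x^2 : ℝ) : ℂ) * (φ x * (starRingEnd ℂ) (φ x)) = (P:ℂ) := by
    have : (fun x : ℝ => ((1 - x^2 : ℝ) : ℂ) * (φ x * (starRingEnd ℂ) (φ x)))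
        = fun x => (((1 - x^2) * Complex.normSq (φ x) : ℝ) : ℂ) := by
      funext x; rw [Complex.mul_conj]; push_cast; ring
    rw [this, intervalIntegral.integral_ofReal, ← hP_def]
  set Z : ℂ := ∫ x in (-1:ℝ)..1, ((1 - x^2 : ℝ) : ℂ) * (d2 x * (starRingEnd ℂ) (φ x)) with hZ_def
  clear_value Z
  -- integrability
  have h1y2 : Continuous fun x : ℝ => ((1 - x^2 : ℝ) : ℂ) :=
    Complex.continuous_ofReal.comp (continuous_const.sub (continuous_pow 2))
  have hi0 : IntervalIntegrable (fun x => φ x * (starRingEnd ℂ) (φ x)) volume (-1) 1 :=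
    (hc0.mul hcconj0).intervalIntegrable _ _
  have hi2 : IntervalIntegrable (fun x => d2 x * (starRingEnd ℂ) (φ x)) volume (-1) 1 :=
    (hc2.mul hcconj0).intervalIntegrable _ _
  have hi4 : IntervalIntegrable (fun x => d4 x * (starRingEnd ℂ) (φ x)) volume (-1) 1 :=
    (hc4.mul hcconj0).intervalIntegrable _ _
  have hiz : IntervalIntegrable
      (fun x => ((1 - x^2 : ℝ) : ℂ) * (d2 x * (starRingEnd ℂ) (φ x))) volume (-1) 1 :=
    (h1y2.mul (hc2.mul hcconj0)).intervalIntegrable _ _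
  have hip : IntervalIntegrable
      (fun x => ((1 - x^2 : ℝ) : ℂ) * (φ x * (starRingEnd ℂ) (φ x))) volume (-1) 1 :=
    (h1y2.mul (hc0.mul hcconj0)).intervalIntegrable _ _
  -- split the inner bracket
  have s1 : ∫ x in (-1:ℝ)..1,
      (((1 - x^2 : ℝ) : ℂ) * (d2 x * (starRingEnd ℂ) (φ x))
        - ((T^2 : ℝ) : ℂ) * (((1 - x^2 : ℝ) : ℂ) * (φ x * (starRingEnd ℂ) (φ x)))
        + 2 * (φ x * (starRingEnd ℂ) (φ x)))
      = Z - ((T^2 : ℝ) : ℂ) * (P:ℂ) + 2 * (c:ℂ) := by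
    rw [intervalIntegral.integral_add (hiz.sub (hip.const_mul _)) (hi0.const_mul _),
      intervalIntegral.integral_sub hiz (hip.const_mul _),
      intervalIntegral.integral_const_mul, intervalIntegral.integral_const_mul, EP, E0, ← hZ_def]
  have s2 : ∫ x in (-1:ℝ)..1,
      (d4 x * (starRingEnd ℂ) (φ x)
        - ((2*T^2 : ℝ) : ℂ) * (d2 x * (starRingEnd ℂ) (φ x))
        + ((T^4 : ℝ) : ℂ) * (φ x * (starRingEnd ℂ) (φ x))
        + ((3*A*T : ℝ) : ℂ) * Complex.I *
          (((1 - x^2 : ℝ) : ℂ) * (d2 x * (starRingEnd ℂ) (φ x))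
            - ((T^2 : ℝ) : ℂ) * (((1 - x^2 : ℝ) : ℂ) * (φ x * (starRingEnd ℂ) (φ x)))
            + 2 * (φ x * (starRingEnd ℂ) (φ x))))
      = (a:ℂ) - ((2*T^2 : ℝ) : ℂ) * (-(b:ℂ)) + ((T^4 : ℝ) : ℂ) * (c:ℂ)
        + ((3*A*T : ℝ) : ℂ) * Complex.I * (Z - ((T^2 : ℝ) : ℂ) * (P:ℂ) + 2 * (c:ℂ)) := by
    have hibr : IntervalIntegrable
        (fun x => ((1 - x^2 : ℝ) : ℂ) * (d2 x * (starRingEnd ℂ) (φ x))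
          - ((T^2 : ℝ) : ℂ) * (((1 - x^2 : ℝ) : ℂ) * (φ x * (starRingEnd ℂ) (φ x)))
          + 2 * (φ x * (starRingEnd ℂ) (φ x))) volume (-1) 1 :=
      (hiz.sub (hip.const_mul _)).add (hi0.const_mul _)
    rw [intervalIntegral.integral_add
        (((hi4.sub (hi2.const_mul _)).add (hi0.const_mul _))) (hibr.const_mul _),
      intervalIntegral.integral_add (hi4.sub (hi2.const_mul _)) (hi0.const_mul _),
      intervalIntegral.integral_sub hi4 (hi2.const_mul _),
      intervalIntegral.integral_const_mul, intervalIntegral.integral_const_mul,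
      intervalIntegral.integral_const_mul, s1, E0, E2, E4]
  -- the equation holds on the closed interval
  have hFcont : Continuous fun x : ℝ =>
      (d4 x - 2*(T:ℂ)^2 * d2 x + (T:ℂ)^4 * φ x + 3*(A:ℂ)*(T:ℂ)*Complex.I *
        (((1 - x^2 : ℝ) : ℂ) * (d2 x - (T:ℂ)^2 * φ x) + 2 * φ x)) * (starRingEnd ℂ) (φ x) :=
    (((hc4.sub (continuous_const.mul hc2)).add (continuous_const.mul hc0)).add
      (continuous_const.mul ((h1y2.mul (hc2.sub (continuous_const.mul hc0))).add
        (continuous_const.mul hc0)))).mul hcconj0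
  have hGcont : Continuous fun x : ℝ =>
      (lam * (d2 x - (T:ℂ)^2 * φ x)) * (starRingEnd ℂ) (φ x) :=
    (continuous_const.mul (hc2.sub (continuous_const.mul hc0))).mul hcconj0
  have hFG : Set.EqOn
      (fun x : ℝ => (d4 x - 2*(T:ℂ)^2 * d2 x + (T:ℂ)^4 * φ x + 3*(A:ℂ)*(T:ℂ)*Complex.I *
        (((1 - x^2 : ℝ) : ℂ) * (d2 x - (T:ℂ)^2 * φ x) + 2 * φ x)) * (starRingEnd ℂ) (φ x))
      (fun x : ℝ => (lam * (d2 x - (T:ℂ)^2 * φ x)) * (starRingEnd ℂ) (φ x))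
      (Icc (-1:ℝ) 1) := by
    have hsub : Set.EqOn
        (fun x : ℝ => (d4 x - 2*(T:ℂ)^2 * d2 x + (T:ℂ)^4 * φ x + 3*(A:ℂ)*(T:ℂ)*Complex.I *
          (((1 - x^2 : ℝ) : ℂ) * (d2 x - (T:ℂ)^2 * φ x) + 2 * φ x)) * (starRingEnd ℂ) (φ x))
        (fun x : ℝ => (lam * (d2 x - (T:ℂ)^2 * φ x)) * (starRingEnd ℂ) (φ x))
        (Ioo (-1:ℝ) 1) := fun x hx =>
      congrArg (fun z => z * (starRingEnd ℂ) (φ x)) (heq x hx)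
    have h := hsub.closure hFcont hGcont
    rwa [closure_Ioo (by norm_num : (-1:ℝ) ≠ 1)] at h
  have hIntEq : ∫ x in (-1:ℝ)..1,
      (d4 x - 2*(T:ℂ)^2 * d2 x + (T:ℂ)^4 * φ x + 3*(A:ℂ)*(T:ℂ)*Complex.I *
        (((1 - x^2 : ℝ) : ℂ) * (d2 x - (T:ℂ)^2 * φ x) + 2 * φ x)) * (starRingEnd ℂ) (φ x)
      = ∫ x in (-1:ℝ)..1, (lam * (d2 x - (T:ℂ)^2 * φ x)) * (starRingEnd ℂ) (φ x) :=
    intervalIntegral.integral_congr (by rw [Set.uIcc_of_le (by norm_num : (-1:ℝ) ≤ 1)]; exact hFG)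
  have hcongr : ∫ x in (-1:ℝ)..1,
      (d4 x - 2*(T:ℂ)^2 * d2 x + (T:ℂ)^4 * φ x + 3*(A:ℂ)*(T:ℂ)*Complex.I *
        (((1 - x^2 : ℝ) : ℂ) * (d2 x - (T:ℂ)^2 * φ x) + 2 * φ x)) * (starRingEnd ℂ) (φ x)
      = ∫ x in (-1:ℝ)..1,
      (d4 x * (starRingEnd ℂ) (φ x)
        - ((2*T^2 : ℝ) : ℂ) * (d2 x * (starRingEnd ℂ) (φ x))
        + ((T^4 : ℝ) : ℂ) * (φ x * (starRingEnd ℂ) (φ x))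
        + ((3*A*T : ℝ) : ℂ) * Complex.I *
          (((1 - x^2 : ℝ) : ℂ) * (d2 x * (starRingEnd ℂ) (φ x))
            - ((T^2 : ℝ) : ℂ) * (((1 - x^2 : ℝ) : ℂ) * (φ x * (starRingEnd ℂ) (φ x)))
            + 2 * (φ x * (starRingEnd ℂ) (φ x)))) :=
    intervalIntegral.integral_congr (fun x _ => by push_cast; ring)
  have hR : ∫ x in (-1:ℝ)..1, (lam * (d2 x - (T:ℂ)^2 * φ x)) * (starRingEnd ℂ) (φ x)
      = lam * (-(b:ℂ) - ((T^2 : ℝ) : ℂ) * (c:ℂ)) := by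
    have e : (fun x : ℝ => (lam * (d2 x - (T:ℂ)^2 * φ x)) * (starRingEnd ℂ) (φ x))
        = fun x => lam * (d2 x * (starRingEnd ℂ) (φ x))
            - lam * ((T^2 : ℝ) : ℂ) * (φ x * (starRingEnd ℂ) (φ x)) :=
      funext fun x => by push_cast; ring
    rw [e, intervalIntegral.integral_sub (hi2.const_mul _) (hi0.const_mul _),
      intervalIntegral.integral_const_mul, intervalIntegral.integral_const_mul, E2, E0]
    ring
  have hfinal : (a:ℂ) - ((2*T^2 : ℝ) : ℂ) * (-(b:ℂ)) + ((T^4 : ℝ) : ℂ) * (c:ℂ)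
      + ((3*A*T : ℝ) : ℂ) * Complex.I * (Z - ((T^2 : ℝ) : ℂ) * (P:ℂ) + 2 * (c:ℂ))
      = lam * (-(b:ℂ) - ((T^2 : ℝ) : ℂ) * (c:ℂ)) := by
    rw [← s2, ← hcongr, hIntEq, hR]
  -- real part
  have hre : a + 2*T^2 * b + T^4 * c - (3*A*T) * Z.im + lam.re * b + lam.re * (T^2 * c) = 0 := by
    have h := congrArg Complex.re hfinal
    simp only [Complex.add_re, Complex.sub_re, Complex.mul_re, Complex.mul_im,
      Complex.add_im, Complex.sub_im, Complex.neg_re, Complex.neg_im,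
      Complex.ofReal_re, Complex.ofReal_im, Complex.I_re, Complex.I_im,
      Complex.re_ofNat, Complex.im_ofNat, mul_zero, zero_mul, mul_one, one_mul,
      sub_zero, zero_sub, add_zero, zero_add, neg_zero, neg_neg, mul_neg, neg_mul] at h
    linear_combination h
  -- bounds
  have hnc2 : Continuous fun x => Complex.normSq (d2 x) := Complex.continuous_normSq.comp hc2
  have hnc0 : Continuous fun x => Complex.normSq (φ x) := Complex.continuous_normSq.comp hc0
  have hZim : |Z.im| ≤ (a + c)/2 := by
    have h1 : |Z.im| ≤ ‖Z‖ := Complex.abs_im_le_norm Z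
    have h2 : ‖Z‖ ≤ ∫ x in (-1:ℝ)..1,
        ‖((1 - x^2 : ℝ) : ℂ) * (d2 x * (starRingEnd ℂ) (φ x))‖ := by
      rw [hZ_def]
      exact intervalIntegral.norm_integral_le_integral_norm (by norm_num)
    have h3 : ∫ x in (-1:ℝ)..1, ‖((1 - x^2 : ℝ) : ℂ) * (d2 x * (starRingEnd ℂ) (φ x))‖
        ≤ ∫ x in (-1:ℝ)..1, ((Complex.normSq (d2 x) + Complex.normSq (φ x))/2) := by
      apply intervalIntegral.integral_mono_on (by norm_num)
        ((h1y2.mul (hc2.mul hcconj0)).norm.intervalIntegrable _ _)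
        (((hnc2.add hnc0).div_const 2).intervalIntegrable _ _)
      intro x hx
      have e1 : ‖((1 - x^2 : ℝ) : ℂ) * (d2 x * (starRingEnd ℂ) (φ x))‖
          = |1 - x^2| * (‖d2 x‖ * ‖φ x‖) := by
        rw [norm_mul, norm_mul, Complex.norm_real, Real.norm_eq_abs, Complex.norm_conj]
      simp only [Pi.mul_apply, Pi.add_apply]
      rw [e1]
      have hx1 : |1 - x^2| ≤ 1 := by
        rw [abs_le]; constructor <;> nlinarith [hx.1, hx.2]
      have hsq2 : ‖d2 x‖ ^ 2 = Complex.normSq (d2 x) := Complex.sq_norm _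
      have hsq0 : ‖φ x‖ ^ 2 = Complex.normSq (φ x) := Complex.sq_norm _
      nlinarith [norm_nonneg (d2 x), norm_nonneg (φ x),
        sq_nonneg (‖d2 x‖ - ‖φ x‖),
        mul_nonneg (norm_nonneg (d2 x)) (norm_nonneg (φ x))]
    have h4 : ∫ x in (-1:ℝ)..1, ((Complex.normSq (d2 x) + Complex.normSq (φ x))/2)
        = (a + c)/2 := by
      rw [intervalIntegral.integral_div, intervalIntegral.integral_add
        (hnc2.intervalIntegrable _ _) (hnc0.intervalIntegrable _ _), ← ha_def, ← hc_def]
    linarith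
  have hb16 : b ≤ 16 * a := by
    rw [hb_def, ha_def]; exact my_poincare hder1 hc2 hdm1
  have hc16 : c ≤ 16 * b := by
    rw [hc_def, hb_def]; exact my_poincare hder0 hc1 hm1
  have ha0 : 0 ≤ a := by
    rw [ha_def]
    exact intervalIntegral.integral_nonneg (by norm_num) (fun u _ => Complex.normSq_nonneg _)
  have hb0 : 0 ≤ b := by
    rw [hb_def]
    exact intervalIntegral.integral_nonneg (by norm_num) (fun u _ => Complex.normSq_nonneg _)
  have hc0' : 0 ≤ c := by
    rw [hc_def]
    exact intervalIntegral.integral_nonneg (by norm_num) (fun u _ => Complex.normSq_nonneg _)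
  have hKZ : (3*A*T) * Z.im ≤ (3/1000) * ((a + c)/2) := by
    calc (3*A*T) * Z.im ≤ |(3*A*T) * Z.im| := le_abs_self _
      _ = |3*A*T| * |Z.im| := abs_mul _ _
      _ ≤ (3/1000) * ((a + c)/2) := by
          apply mul_le_mul _ hZim (abs_nonneg _) (by norm_num)
          have : |3*A*T| = 3 * |A*T| := by
            rw [show (3*A*T : ℝ) = 3*(A*T) by ring, abs_mul]; norm_num
          rw [this]; linarith
  have hTb : 0 ≤ 2*T^2 * b := by positivity
  have hTc : 0 ≤ T^4 * c := by positivity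
  have hlb : 0 ≤ lam.re * b := mul_nonneg hlam hb0
  have hlc : 0 ≤ lam.re * (T^2 * c) := mul_nonneg hlam (by positivity)
  have haz : a = 0 := by
    linarith [hre, hKZ, hb16, hc16, ha0, hb0, hc0', hTb, hTc, hlb, hlc]
  have hcz : c = 0 := by linarith [hb16, hc16, ha0, hb0, hc0']
  -- conclude φ = 0 on [-1,1]
  by_contra hne
  have hpos : 0 < c := by
    rw [hc_def]
    apply intervalIntegral.integral_pos (by norm_num)
      (hnc0.continuousOn)
      (fun x _ => Complex.normSq_nonneg _)
    exact ⟨y₀, hy₀, Complex.normSq_pos.mpr hne⟩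
  linarith
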